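/- Let r, s be integers with 1 ≤ r < s and s − r not divisible by 3; put r̂ = 2r+s, ŝ = r+2s, g = r+s−1, and let Ĥ = {3i + r̂ : i ∈ ℕ₀} ∪ {3i + ŝ : i ∈ ℕ₀} ∪ {3i + 3(r+s) : i ∈ ℕ₀}. Set g_{r̂} = ⌊(ŝ−1)/3⌋ and g_{ŝ} = ⌊(r̂−1)/3⌋. Then g = g_{r̂} + g_{ŝ}, and the set of the g smallest elements of Ĥ is exactly {3i + r̂ : 0 ≤ i < g_{r̂}} ∪ {3i + ŝ : 0 ≤ i < g_{ŝ}}. -/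
import Mathlib


/-- With `r̂ = 2r+s`, `ŝ = r+2s`, `g = r+s−1`,
`Ĥ = {3i+r̂} ∪ {3i+ŝ} ∪ {3i+3(r+s)}`, `g_{r̂} = ⌊(ŝ−1)/3⌋`, `g_{ŝ} = ⌊(r̂−1)/3⌋`:
then `g = g_{r̂} + g_{ŝ}` and the set of the `g` smallest elements of `Ĥ` is exactly
`{3i+r̂ : 0 ≤ i < g_{r̂}} ∪ {3i+ŝ : 0 ≤ i < g_{ŝ}}`. -/
theorem stmt7 (r s : ℕ) (hr : 1 ≤ r) (hrs : r < s) (h3 : ¬ (3 ∣ (s - r)))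
    (rh sh g grh gsh : ℕ) (Hhat S : Set ℕ)
    (hrh : rh = 2*r + s) (hsh : sh = r + 2*s) (hg : g = r + s - 1)
    (hgrh : grh = (sh - 1) / 3) (hgsh : gsh = (rh - 1) / 3)
    (hH : Hhat = {n | ∃ i, n = 3*i + rh} ∪ {n | ∃ i, n = 3*i + sh}
                  ∪ {n | ∃ i, n = 3*i + 3*(r+s)})
    (hS : S = {n | ∃ i < grh, n = 3*i + rh} ∪ {n | ∃ i < gsh, n = 3*i + sh}) :
    g = grh + gsh ∧
    S ⊆ Hhat ∧ S.ncard = g ∧ ∀ x ∈ Hhat \ S, ∀ y ∈ S, y < x := by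
  subst hrh hsh hg hgrh hgsh hH hS
  have hcase : (s - r) % 3 = 1 ∨ (s - r) % 3 = 2 := by omega
  refine ⟨by rcases hcase with h | h <;> omega, ?_, ?_, ?_⟩
  · rintro x (⟨i, hi, rfl⟩ | ⟨i, hi, rfl⟩)
    · exact Or.inl (Or.inl ⟨i, rfl⟩)
    · exact Or.inl (Or.inr ⟨i, rfl⟩)
  · have hset : ({n | ∃ i < (r + 2*s - 1) / 3, n = 3*i + (2*r + s)} ∪
        {n | ∃ i < (2*r + s - 1) / 3, n = 3*i + (r + 2*s)} : Set ℕ)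
        = ↑((((Finset.range ((r + 2*s - 1) / 3)).image fun i => 3*i + (2*r + s)) ∪
            ((Finset.range ((2*r + s - 1) / 3)).image fun i => 3*i + (r + 2*s)))) := by
      ext n
      simp only [Set.mem_union, Set.mem_setOf_eq, Finset.coe_union, Finset.coe_image,
        Finset.coe_range, Set.mem_image, Set.mem_Iio]
      constructor
      · rintro (⟨i, hi, rfl⟩ | ⟨i, hi, rfl⟩)
        · exact Or.inl ⟨i, hi, rfl⟩
        · exact Or.inr ⟨i, hi, rfl⟩
      · rintro (⟨i, hi, rfl⟩ | ⟨i, hi, rfl⟩)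
        · exact Or.inl ⟨i, hi, rfl⟩
        · exact Or.inr ⟨i, hi, rfl⟩
    rw [hset, Set.ncard_coe_finset]
    rw [Finset.card_union_of_disjoint, Finset.card_image_of_injective,
      Finset.card_image_of_injective, Finset.card_range, Finset.card_range]
    · rcases hcase with h | h <;> omega
    · intro a b h; dsimp only at h; omega
    · intro a b h; dsimp only at h; omega
    · simp only [Finset.disjoint_left, Finset.mem_image, Finset.mem_range]
      rintro x ⟨i, hi, rfl⟩ ⟨j, hj, hj2⟩
      rcases hcase with h | h <;> omega
  · rintro x ⟨hxH, hxS⟩ y hy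
    have hy' : y ≤ 3*(r+s) - 4 := by
      rcases hy with ⟨j, hj, rfl⟩ | ⟨j, hj, rfl⟩ <;> rcases hcase with h | h <;> omega
    rcases hxH with (⟨i, rfl⟩ | ⟨i, rfl⟩) | ⟨i, rfl⟩
    · have : ¬ i < (r + 2*s - 1) / 3 := fun h => hxS (Or.inl ⟨i, h, rfl⟩)
      rcases hcase with h | h <;> omega
    · have : ¬ i < (2*r + s - 1) / 3 := fun h => hxS (Or.inr ⟨i, h, rfl⟩)
      rcases hcase with h | h <;> omega
    · rcases hcase with h | h <;> omega
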